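/- Let H be the theta group (stabilizer of the zero characteristic in G = Sp(g,F_2)) and epsilon_H = epsilon_0 its quadratic character. The induced representation Ind_H^G(epsilon_H) is either irreducible or decomposes into exactly two non-isomorphic irreducible components; equivalently dim Hom_G(Ind_H^G(epsilon_H), Ind_H^G(epsilon_H)) <= 2. -/

import Mathlib

open Matrix BigOperators

/-- A characteristic: a vector in `F₂^{2g}`, indexed by `Fin g ⊕ Fin g`
(the first block is `a`, the second is `b`). -/
abbrev Char2 (g : ℕ) := (Fin g ⊕ Fin g) → ZMod 2

/-- The `a`-part of a characteristic. -/
def aPart {g : ℕ} (m : Char2 g) : Fin g → ZMod 2 := fun i => m (Sum.inl i)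

/-- The `b`-part of a characteristic. -/
def bPart {g : ℕ} (m : Char2 g) : Fin g → ZMod 2 := fun i => m (Sum.inr i)

/-- A characteristic `m = (a;b)` is even if `a'b = 0`. -/
def IsEvenChar {g : ℕ} (m : Char2 g) : Prop := aPart m ⬝ᵥ bPart m = 0

/-- A characteristic `m = (a;b)` is odd if `a'b = 1`. -/
def IsOddChar {g : ℕ} (m : Char2 g) : Prop := aPart m ⬝ᵥ bPart m = 1

instance {g : ℕ} : DecidablePred (IsEvenChar (g := g)) := fun m => by
  unfold IsEvenChar; infer_instance

instance {g : ℕ} : DecidablePred (IsOddChar (g := g)) := fun m => by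
  unfold IsOddChar; infer_instance

/-- The type of `2g × 2g` matrices over `F₂`. -/
abbrev SpMat (g : ℕ) := Matrix (Fin g ⊕ Fin g) (Fin g ⊕ Fin g) (ZMod 2)

/-- The offset `((CD')₀ ; (AB')₀)` appearing in the affine action. -/
def offVec {g : ℕ} (σ : SpMat g) : Char2 g :=
  Sum.elim (Matrix.diag (σ.toBlocks₂₁ * (σ.toBlocks₂₂)ᵀ))
           (Matrix.diag (σ.toBlocks₁₁ * (σ.toBlocks₁₂)ᵀ))

/-- The affine action `σ{m} = (σ')⁻¹ m + ((CD')₀ ; (AB')₀)`. -/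
noncomputable def affAct {g : ℕ} (σ : SpMat g) (m : Char2 g) : Char2 g :=
  (σᵀ)⁻¹ *ᵥ m + offVec σ

/-- The sign `(-1)^x` for `x : F₂`. -/
def sgn2 (x : ZMod 2) : ℤ := if x = 0 then 1 else -1

/-- The quadratic form `M[x] = x' M x`. -/
def quadF {g : ℕ} (M : Matrix (Fin g) (Fin g) (ZMod 2)) (x : Fin g → ZMod 2) : ZMod 2 :=
  x ⬝ᵥ (M *ᵥ x)

/-- `ε_m(σ) = (-1)^{tr(B'C) + (B'D)[a] + (A'C)[b]}`. -/
def epsChar {g : ℕ} (m : Char2 g) (σ : SpMat g) : ℤ :=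
  sgn2 (Matrix.trace ((σ.toBlocks₁₂)ᵀ * σ.toBlocks₂₁)
    + quadF ((σ.toBlocks₁₂)ᵀ * σ.toBlocks₂₂) (aPart m)
    + quadF ((σ.toBlocks₁₁)ᵀ * σ.toBlocks₂₁) (bPart m))

/-- The symplectic pairing `<m,n> = a'β + b'α`. -/
def pairing {g : ℕ} (m n : Char2 g) : ZMod 2 :=
  aPart m ⬝ᵥ bPart n + bPart m ⬝ᵥ aPart n

/-- `e(m,n) = (-1)^{<m,n>}`. -/
def eSign {g : ℕ} (m n : Char2 g) : ℤ := sgn2 (pairing m n)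

/-- The symplectic group `Sp(g, F₂)` as a group. -/
abbrev SpGrp (g : ℕ) := ↥(Matrix.symplecticGroup (Fin g) (ZMod 2))

/-- The stabilizer `H(m)` of the characteristic `m` under the affine action,
as a subset of `Sp(g, F₂)`. -/
def stabSet (g : ℕ) (m : Char2 g) : Set (SpGrp g) :=
  {σ | affAct (σ : SpMat g) m = m}

/-- The induced representation space `Ind_{H(m)}^G(ε_m)`: functions `f : G → ℂ`
with `f(hx) = ε_m(h) f(x)` for `h ∈ H(m)`; `G` acts by right translation. -/
noncomputable def IndEps (g : ℕ) (m : Char2 g) : Submodule ℂ (SpGrp g → ℂ) where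
  carrier := {f | ∀ h x : SpGrp g, h ∈ stabSet g m →
    f (h * x) = ((epsChar m (h : SpMat g) : ℤ) : ℂ) * f x}
  add_mem' := by
    intro f f' hf hf' h x hh
    simp only [Pi.add_apply, hf h x hh, hf' h x hh]
    ring
  zero_mem' := by
    intro h x hh
    simp
  smul_mem' := by
    intro c f hf h x hh
    simp only [Pi.smul_apply, smul_eq_mul, hf h x hh]
    ring

/-- Right translation by `σ` on `Ind_{H(m)}^G(ε_m)`. -/
noncomputable def rTrans (g : ℕ) (m : Char2 g) (σ : SpGrp g) :
    IndEps g m →ₗ[ℂ] IndEps g m where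
  toFun f := ⟨fun x => f.1 (x * σ), by
    intro h x hh
    simpa [mul_assoc] using f.2 h (x * σ) hh⟩
  map_add' f f' := rfl
  map_smul' c f := rfl

/-- A `G`-equivariant endomorphism of `Ind_{H(m)}^G(ε_m)`: one commuting with
all right translations. -/
def IsEquivariant (g : ℕ) (m : Char2 g) (φ : IndEps g m →ₗ[ℂ] IndEps g m) : Prop :=
  ∀ σ : SpGrp g, φ ∘ₗ rTrans g m σ = rTrans g m σ ∘ₗ φ


set_option linter.unusedSectionVars false
namespace ThetaAux



lemma z2_add_self (x : ZMod 2) : x + x = 0 := by revert x; decide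
lemma z2_mul_self (x : ZMod 2) : x * x = x := by revert x; decide
lemma z2_aba (a b : ZMod 2) : a * (b * a) = b * a := by revert a b; decide
lemma z2_aba' (a b : ZMod 2) : a * b * a = b * a := by revert a b; decide
lemma z2_neg (x : ZMod 2) : -x = x := by revert x; decide

lemma sum_pairs {n : Type*} [Fintype n] [DecidableEq n] (f : n → n → ZMod 2)
    (hf : ∀ i j, f i j = f j i) :
    (∑ i, ∑ j, f i j) = ∑ i, f i i := by
  classical
  rw [← Finset.sum_product']
  rw [← Finset.sum_filter_add_sum_filter_not (Finset.univ ×ˢ Finset.univ)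
    (fun p => p.1 = p.2) (fun p => f p.1 p.2)]
  have h1 : ∑ p ∈ (Finset.univ ×ˢ Finset.univ).filter (fun p => p.1 = p.2),
      f p.1 p.2 = ∑ i, f i i := by
    refine Finset.sum_nbij' (fun p => p.1) (fun i => (i, i)) ?_ ?_ ?_ ?_ ?_
    · intro p hp; simp
    · intro i hi; simp
    · intro p hp; simp only [Finset.mem_filter] at hp
      exact Prod.ext rfl hp.2
    · intro i hi; rfl
    · intro p hp; simp only [Finset.mem_filter] at hp
      rw [← hp.2]
  have h2 : ∑ p ∈ (Finset.univ ×ˢ Finset.univ).filter (fun p => ¬ p.1 = p.2),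
      f p.1 p.2 = 0 := by
    apply Finset.sum_involution (fun p _ => (p.2, p.1))
    · intro p hp; rw [hf p.2 p.1]; exact z2_add_self _
    · intro p hp _; simp only [Finset.mem_filter] at hp
      intro hc
      exact hp.2 (congrArg Prod.snd hc)
    · intro p hp; simp only [Finset.mem_filter] at hp ⊢
      exact ⟨by simp, fun h => hp.2 h.symm⟩
    · intro p hp; rfl
  rw [h1, h2, add_zero]

variable {n : Type*} [Fintype n] [DecidableEq n]

lemma symm_apply {S : Matrix n n (ZMod 2)} (hS : Sᵀ = S) (i j : n) : S i j = S j i := by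
  conv_lhs => rw [← hS]
  exact Matrix.transpose_apply S i j

lemma dot_mulVec_symm (S : Matrix n n (ZMod 2)) (hS : Sᵀ = S) (x : n → ZMod 2) :
    x ⬝ᵥ (S *ᵥ x) = Matrix.diag S ⬝ᵥ x := by
  have h : x ⬝ᵥ (S *ᵥ x) = ∑ i, ∑ j, x i * (S i j * x j) := by
    simp [dotProduct, Matrix.mulVec, Finset.mul_sum]
  rw [h, sum_pairs (fun i j => x i * (S i j * x j))
    (fun i j => by
      show x i * (S i j * x j) = x j * (S j i * x i)
      rw [symm_apply hS i j]; ring)]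
  simp only [dotProduct, Matrix.diag]
  exact Finset.sum_congr rfl fun i _ => z2_aba _ _

lemma diag_conj (M S : Matrix n n (ZMod 2)) (hS : Sᵀ = S) :
    Matrix.diag (M * S * Mᵀ) = M *ᵥ Matrix.diag S := by
  funext i
  have h : (M * S * Mᵀ) i i = ∑ j, ∑ k, M i j * S j k * M i k := by
    simp only [Matrix.mul_apply, Matrix.transpose_apply, Finset.sum_mul]
    rw [Finset.sum_comm]
  rw [Matrix.diag_apply, h, sum_pairs (fun j k => M i j * S j k * M i k)
    (fun j k => by
      show M i j * S j k * M i k = M i k * S k j * M i j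
      rw [symm_apply hS j k]; ring)]
  simp only [Matrix.mulVec, dotProduct, Matrix.diag]
  refine Finset.sum_congr rfl fun j _ => ?_
  show M i j * S j j * M i j = M i j * S j j
  rw [mul_comm (M i j) (S j j), mul_assoc, z2_mul_self]

lemma trace_mul_symm (S T : Matrix n n (ZMod 2)) (hS : Sᵀ = S) (hT : Tᵀ = T) :
    Matrix.trace (S * T) = Matrix.diag S ⬝ᵥ Matrix.diag T := by
  have h : Matrix.trace (S * T) = ∑ i, ∑ j, S i j * T i j := by
    simp only [Matrix.trace, Matrix.diag, Matrix.mul_apply]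
    refine Finset.sum_congr rfl fun i _ => Finset.sum_congr rfl fun j _ => ?_
    rw [symm_apply hT j i]
  rw [h, sum_pairs (fun i j => S i j * T i j)
    (fun i j => by
      show S i j * T i j = S j i * T j i
      rw [symm_apply hS i j, symm_apply hT i j])]
  simp [dotProduct, Matrix.diag]

lemma trace_sq (X : Matrix n n (ZMod 2)) :
    Matrix.trace (X * X) = Matrix.trace X := by
  have h : Matrix.trace (X * X) = ∑ i, ∑ j, X i j * X j i := by
    simp only [Matrix.trace, Matrix.diag, Matrix.mul_apply]
  rw [h, sum_pairs (fun i j => X i j * X j i) (fun i j => by ring)]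
  simp only [Matrix.trace, Matrix.diag]
  exact Finset.sum_congr rfl fun i _ => z2_mul_self _


lemma z2_add_self' (x : ZMod 2) : x + x = 0 := by revert x; decide
lemma z2_two : (2 : ZMod 2) = 0 := rfl

variable {g : ℕ}

abbrev Mg (g : ℕ) := Matrix (Fin g) (Fin g) (ZMod 2)

lemma mat_neg (X : Mg g) : -X = X := by
  ext i j; rw [Matrix.neg_apply]; exact z2_neg _

lemma mat_add_self (X : Mg g) : X + X = 0 := by
  ext i j; rw [Matrix.add_apply]; exact z2_add_self' _

lemma mat_eq_of_add_eq_zero {X Y : Mg g} (h : X + Y = 0) : X = Y := by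
  have h2 : X = -Y := eq_neg_of_add_eq_zero_left h
  rw [h2, mat_neg]

lemma J2 : J (Fin g) (ZMod 2) = fromBlocks 0 1 1 0 := by
  rw [J, show (-1 : Mg g) = 1 from mat_neg 1]

lemma blocks_eq {W X Y Z W' X' Y' Z' : Mg g}
    (h : fromBlocks W X Y Z = fromBlocks W' X' Y' Z') :
    W = W' ∧ X = X' ∧ Y = Y' ∧ Z = Z' := by
  refine ⟨?_, ?_, ?_, ?_⟩
  · have := congrArg Matrix.toBlocks₁₁ h; simpa using this
  · have := congrArg Matrix.toBlocks₁₂ h; simpa using this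
  · have := congrArg Matrix.toBlocks₂₁ h; simpa using this
  · have := congrArg Matrix.toBlocks₂₂ h; simpa using this

/-- All the block relations of a symplectic matrix over F₂. -/
lemma sp_rels {A B C D : Mg g}
    (hσ : fromBlocks A B C D ∈ symplecticGroup (Fin g) (ZMod 2)) :
    A * Bᵀ = B * Aᵀ ∧ C * Dᵀ = D * Cᵀ ∧ A * Dᵀ + B * Cᵀ = 1 ∧
    Aᵀ * C = Cᵀ * A ∧ Bᵀ * D = Dᵀ * B ∧ Aᵀ * D + Cᵀ * B = 1 ∧
    Dᵀ * A + Bᵀ * C = 1 ∧ D * Aᵀ + C * Bᵀ = 1 := by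
  have h1 := (SymplecticGroup.mem_iff).mp hσ
  have h2 := (SymplecticGroup.mem_iff').mp hσ
  rw [J2, fromBlocks_transpose, fromBlocks_multiply, fromBlocks_multiply] at h1 h2
  simp only [Matrix.mul_zero, Matrix.mul_one, Matrix.zero_mul, Matrix.one_mul,
    zero_add, add_zero] at h1 h2
  obtain ⟨e11, e12, e21, e22⟩ := blocks_eq h1
  obtain ⟨f11, f12, f21, f22⟩ := blocks_eq h2
  refine ⟨(mat_eq_of_add_eq_zero e11).symm,
    (mat_eq_of_add_eq_zero e22).symm,
    by rw [add_comm]; exact e12,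
    (mat_eq_of_add_eq_zero f11).symm,
    mat_eq_of_add_eq_zero (by rw [add_comm]; exact f22),
    by rw [add_comm]; exact f12, f21, e21⟩

/-- `(σᵀ)⁻¹ = fromBlocks D C B A` for symplectic σ. -/
lemma spT_mul_affLin {A B C D : Mg g}
    (hσ : fromBlocks A B C D ∈ symplecticGroup (Fin g) (ZMod 2)) :
    (fromBlocks A B C D)ᵀ * fromBlocks D C B A = 1 := by
  obtain ⟨r1, r2, r3, r4, r5, r6, r7, r8⟩ := sp_rels hσ
  rw [fromBlocks_transpose, fromBlocks_multiply]
  rw [r6, show Aᵀ * C + Cᵀ * A = 0 from by rw [r4]; exact mat_add_self _,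
    show Bᵀ * D + Dᵀ * B = 0 from by rw [r5]; exact mat_add_self _,
    show Bᵀ * C + Dᵀ * A = 1 from by rw [add_comm]; exact r7]
  exact fromBlocks_one

lemma spT_inv {A B C D : Mg g}
    (hσ : fromBlocks A B C D ∈ symplecticGroup (Fin g) (ZMod 2)) :
    ((fromBlocks A B C D)ᵀ)⁻¹ = fromBlocks D C B A :=
  Matrix.inv_eq_right_inv (spT_mul_affLin hσ)

lemma sp_mul_spInv {A B C D : Mg g}
    (hσ : fromBlocks A B C D ∈ symplecticGroup (Fin g) (ZMod 2)) :
    fromBlocks A B C D * fromBlocks Dᵀ Bᵀ Cᵀ Aᵀ = 1 := by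
  obtain ⟨r1, r2, r3, r4, r5, r6, r7, r8⟩ := sp_rels hσ
  rw [fromBlocks_multiply]
  rw [r3, show A * Bᵀ + B * Aᵀ = 0 from by rw [r1]; exact mat_add_self _,
    show C * Dᵀ + D * Cᵀ = 0 from by rw [r2]; exact mat_add_self _,
    show C * Bᵀ + D * Aᵀ = 1 from by rw [add_comm]; exact r8]
  exact fromBlocks_one

lemma sp_inv {A B C D : Mg g}
    (hσ : fromBlocks A B C D ∈ symplecticGroup (Fin g) (ZMod 2)) :
    (fromBlocks A B C D)⁻¹ = fromBlocks Dᵀ Bᵀ Cᵀ Aᵀ :=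
  Matrix.inv_eq_right_inv (sp_mul_spInv hσ)

variable {g : ℕ}

lemma symm_AB {A B C D : Mg g} (h : fromBlocks A B C D ∈ symplecticGroup (Fin g) (ZMod 2)) :
    (A * Bᵀ)ᵀ = A * Bᵀ := by
  rw [Matrix.transpose_mul, Matrix.transpose_transpose, ← (sp_rels h).1]

lemma symm_CD {A B C D : Mg g} (h : fromBlocks A B C D ∈ symplecticGroup (Fin g) (ZMod 2)) :
    (C * Dᵀ)ᵀ = C * Dᵀ := by
  rw [Matrix.transpose_mul, Matrix.transpose_transpose, ← (sp_rels h).2.1]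

lemma symm_AC {A B C D : Mg g} (h : fromBlocks A B C D ∈ symplecticGroup (Fin g) (ZMod 2)) :
    (Aᵀ * C)ᵀ = Aᵀ * C := by
  rw [Matrix.transpose_mul, Matrix.transpose_transpose, (sp_rels h).2.2.2.1]

lemma symm_BD {A B C D : Mg g} (h : fromBlocks A B C D ∈ symplecticGroup (Fin g) (ZMod 2)) :
    (Bᵀ * D)ᵀ = Bᵀ * D := by
  rw [Matrix.transpose_mul, Matrix.transpose_transpose, (sp_rels h).2.2.2.2.1]

/-- half of the cocycle identity -/
lemma cocycle_half (X Y : Mg g) {A₂ B₂ C₂ D₂ : Mg g}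
    (h2 : fromBlocks A₂ B₂ C₂ D₂ ∈ symplecticGroup (Fin g) (ZMod 2)) :
    Matrix.diag ((X * A₂ + Y * C₂) * (X * B₂ + Y * D₂)ᵀ)
      = Y *ᵥ Matrix.diag (C₂ * D₂ᵀ) + X *ᵥ Matrix.diag (A₂ * B₂ᵀ)
        + Matrix.diag (X * Yᵀ) := by
  obtain ⟨r1, r2, r3, r4, r5, r6, r7, r8⟩ := sp_rels h2
  have expand : (X * A₂ + Y * C₂) * (X * B₂ + Y * D₂)ᵀ
      = X * (A₂ * B₂ᵀ) * Xᵀ + Y * (C₂ * D₂ᵀ) * Yᵀ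
        + (X * (A₂ * D₂ᵀ) * Yᵀ + Y * (C₂ * B₂ᵀ) * Xᵀ) := by
    rw [Matrix.transpose_add, Matrix.transpose_mul, Matrix.transpose_mul]
    noncomm_ring
  rw [expand, Matrix.diag_add, Matrix.diag_add,
    diag_conj X _ (symm_AB h2), diag_conj Y _ (symm_CD h2)]
  have hmid : Matrix.diag (X * (A₂ * D₂ᵀ) * Yᵀ + Y * (C₂ * B₂ᵀ) * Xᵀ)
      = Matrix.diag (X * Yᵀ) := by
    have ht : Matrix.diag (Y * (C₂ * B₂ᵀ) * Xᵀ)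
        = Matrix.diag (X * (B₂ * C₂ᵀ) * Yᵀ) := by
      rw [← Matrix.diag_transpose (Y * (C₂ * B₂ᵀ) * Xᵀ)]
      congr 1
      simp only [Matrix.transpose_mul, Matrix.transpose_transpose]
      noncomm_ring
    rw [Matrix.diag_add, ht, ← Matrix.diag_add, ← Matrix.add_mul, ← Matrix.mul_add, r3,
      Matrix.mul_one]
  rw [hmid]
  abel

/-- The cocycle identity for `offVec`. -/
lemma offVec_fromBlocks (W X Y Z : Mg g) :
    offVec (fromBlocks W X Y Z)
      = Sum.elim (Matrix.diag (Y * Zᵀ)) (Matrix.diag (W * Xᵀ)) := by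
  unfold offVec
  rw [Matrix.toBlocks_fromBlocks₁₁, Matrix.toBlocks_fromBlocks₁₂,
    Matrix.toBlocks_fromBlocks₂₁, Matrix.toBlocks_fromBlocks₂₂]

lemma sum_elim_add (a b c d : Fin g → ZMod 2) :
    Sum.elim a b + Sum.elim c d = Sum.elim (a + c) (b + d) := by
  funext i; cases i <;> rfl

lemma offVec_mul {σ τ : SpMat g} (hσ : σ ∈ symplecticGroup (Fin g) (ZMod 2))
    (hτ : τ ∈ symplecticGroup (Fin g) (ZMod 2)) :
    offVec (σ * τ) = (σᵀ)⁻¹ *ᵥ offVec τ + offVec σ := by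
  rw [← fromBlocks_toBlocks σ] at hσ ⊢
  rw [← fromBlocks_toBlocks τ] at hτ ⊢
  set A₁ := σ.toBlocks₁₁; set B₁ := σ.toBlocks₁₂; set C₁ := σ.toBlocks₂₁; set D₁ := σ.toBlocks₂₂
  set A₂ := τ.toBlocks₁₁; set B₂ := τ.toBlocks₁₂; set C₂ := τ.toBlocks₂₁; set D₂ := τ.toBlocks₂₂
  rw [spT_inv hσ, fromBlocks_multiply, offVec_fromBlocks, offVec_fromBlocks,
    offVec_fromBlocks, fromBlocks_mulVec, sum_elim_add]
  funext i
  cases i with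
  | inl i =>
    have := congrFun (cocycle_half C₁ D₁ hτ) i
    simpa using this
  | inr i =>
    have := congrFun (cocycle_half A₁ B₁ hτ) i
    simpa using this

/-- The point `σ{0} = offVec σ` is an even characteristic. -/
lemma even_offVec {A B C D : Mg g}
    (h : fromBlocks A B C D ∈ symplecticGroup (Fin g) (ZMod 2)) :
    Matrix.diag (C * Dᵀ) ⬝ᵥ Matrix.diag (A * Bᵀ) = 0 := by
  obtain ⟨r1, r2, r3, r4, r5, r6, r7, r8⟩ := sp_rels h
  rw [← trace_mul_symm _ _ (symm_CD h) (symm_AB h)]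
  have hBC : Bᵀ * C = 1 + Dᵀ * A := by
    have := r7
    rw [add_comm] at this
    calc Bᵀ * C = Bᵀ * C + (Dᵀ * A + Dᵀ * A) := by rw [mat_add_self, add_zero]
    _ = (Bᵀ * C + Dᵀ * A) + Dᵀ * A := by abel
    _ = 1 + Dᵀ * A := by rw [this]
  have step : (C * Dᵀ) * (A * Bᵀ) = C * ((Dᵀ * A) * Bᵀ) := by noncomm_ring
  rw [step, Matrix.trace_mul_comm]
  have regroup : Dᵀ * A * Bᵀ * C = (Dᵀ * A) * (Bᵀ * C) := by noncomm_ring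
  rw [regroup, hBC, Matrix.mul_add, Matrix.mul_one, Matrix.trace_add, trace_sq]
  exact z2_add_self' _

/-- Multiplicativity of the trace part of the theta character. -/
lemma eps_tr_mul {A₁ B₁ C₁ D₁ A₂ B₂ C₂ D₂ : Mg g}
    (h1 : fromBlocks A₁ B₁ C₁ D₁ ∈ symplecticGroup (Fin g) (ZMod 2))
    (h2 : fromBlocks A₂ B₂ C₂ D₂ ∈ symplecticGroup (Fin g) (ZMod 2))
    (ha2 : Matrix.diag (C₂ * D₂ᵀ) = 0) (hb2 : Matrix.diag (A₂ * B₂ᵀ) = 0) :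
    Matrix.trace ((A₁ * B₂ + B₁ * D₂)ᵀ * (C₁ * A₂ + D₁ * C₂))
      = Matrix.trace (B₁ᵀ * C₁) + Matrix.trace (B₂ᵀ * C₂) := by
  obtain ⟨q1, q2, q3, q4, q5, q6, q7, q8⟩ := sp_rels h1
  obtain ⟨r1, r2, r3, r4, r5, r6, r7, r8⟩ := sp_rels h2
  have expand : (A₁ * B₂ + B₁ * D₂)ᵀ * (C₁ * A₂ + D₁ * C₂)
      = (B₂ᵀ * (A₁ᵀ * C₁) * A₂ + D₂ᵀ * (B₁ᵀ * D₁) * C₂)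
        + (B₂ᵀ * (A₁ᵀ * D₁) * C₂ + D₂ᵀ * (B₁ᵀ * C₁) * A₂) := by
    rw [Matrix.transpose_add, Matrix.transpose_mul, Matrix.transpose_mul]
    noncomm_ring
  rw [expand, Matrix.trace_add, Matrix.trace_add, Matrix.trace_add]
  have hT1 : Matrix.trace (B₂ᵀ * (A₁ᵀ * C₁) * A₂) = 0 := by
    rw [Matrix.trace_mul_comm, ← Matrix.mul_assoc,
      show A₂ * B₂ᵀ * (A₁ᵀ * C₁) = (A₂ * B₂ᵀ) * (A₁ᵀ * C₁) from rfl,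
      trace_mul_symm _ _ (symm_AB h2) (symm_AC h1), hb2, zero_dotProduct]
  have hT4 : Matrix.trace (D₂ᵀ * (B₁ᵀ * D₁) * C₂) = 0 := by
    rw [Matrix.trace_mul_comm, ← Matrix.mul_assoc,
      show C₂ * D₂ᵀ * (B₁ᵀ * D₁) = (C₂ * D₂ᵀ) * (B₁ᵀ * D₁) from rfl,
      trace_mul_symm _ _ (symm_CD h2) (symm_BD h1), ha2, zero_dotProduct]
  have hAD1 : A₁ᵀ * D₁ = 1 + C₁ᵀ * B₁ := by
    calc A₁ᵀ * D₁ = A₁ᵀ * D₁ + (C₁ᵀ * B₁ + C₁ᵀ * B₁) := by rw [mat_add_self, add_zero]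
    _ = (A₁ᵀ * D₁ + C₁ᵀ * B₁) + C₁ᵀ * B₁ := by abel
    _ = 1 + C₁ᵀ * B₁ := by rw [q6]
  have hAD2 : A₂ * D₂ᵀ = 1 + B₂ * C₂ᵀ := by
    calc A₂ * D₂ᵀ = A₂ * D₂ᵀ + (B₂ * C₂ᵀ + B₂ * C₂ᵀ) := by rw [mat_add_self, add_zero]
    _ = (A₂ * D₂ᵀ + B₂ * C₂ᵀ) + B₂ * C₂ᵀ := by abel
    _ = 1 + B₂ * C₂ᵀ := by rw [r3]
  have hT2 : Matrix.trace (B₂ᵀ * (A₁ᵀ * D₁) * C₂)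
      = Matrix.trace (B₂ᵀ * C₂) + Matrix.trace ((C₂ * B₂ᵀ) * (C₁ᵀ * B₁)) := by
    rw [Matrix.trace_mul_comm, ← Matrix.mul_assoc,
      show C₂ * B₂ᵀ * (A₁ᵀ * D₁) = (C₂ * B₂ᵀ) * (A₁ᵀ * D₁) from rfl, hAD1,
      Matrix.mul_add, Matrix.mul_one, Matrix.trace_add, Matrix.trace_mul_comm C₂ B₂ᵀ]
  have hT3 : Matrix.trace (D₂ᵀ * (B₁ᵀ * C₁) * A₂)
      = Matrix.trace (B₁ᵀ * C₁) + Matrix.trace ((B₂ * C₂ᵀ) * (B₁ᵀ * C₁)) := by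
    rw [Matrix.trace_mul_comm, ← Matrix.mul_assoc,
      show A₂ * D₂ᵀ * (B₁ᵀ * C₁) = (A₂ * D₂ᵀ) * (B₁ᵀ * C₁) from rfl, hAD2,
      Matrix.add_mul, Matrix.one_mul, Matrix.trace_add]
  have hres : Matrix.trace ((C₂ * B₂ᵀ) * (C₁ᵀ * B₁))
      + Matrix.trace ((B₂ * C₂ᵀ) * (B₁ᵀ * C₁)) = 0 := by
    have hx : Matrix.trace ((B₂ * C₂ᵀ) * (B₁ᵀ * C₁))
        = Matrix.trace ((C₂ * B₂ᵀ) * (C₁ᵀ * B₁)) := by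
      rw [← Matrix.trace_transpose ((B₂ * C₂ᵀ) * (B₁ᵀ * C₁)), Matrix.transpose_mul,
        Matrix.transpose_mul, Matrix.transpose_mul, Matrix.transpose_transpose,
        Matrix.transpose_transpose, Matrix.trace_mul_comm]
    rw [hx]
    exact z2_add_self' _
  rw [hT1, hT4, hT2, hT3]
  linear_combination hres


variable {g : ℕ}

/-- quadratic form on characteristics -/
def qc (m : Char2 g) : ZMod 2 := aPart m ⬝ᵥ bPart m

lemma aPart_add (x y : Char2 g) : aPart (x + y) = aPart x + aPart y := rfl
lemma bPart_add (x y : Char2 g) : bPart (x + y) = bPart x + bPart y := rfl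
lemma aPart_smul (c : ZMod 2) (x : Char2 g) : aPart (c • x) = c • aPart x := rfl
lemma bPart_smul (c : ZMod 2) (x : Char2 g) : bPart (c • x) = c • bPart x := rfl
lemma aPart_elim (a b : Fin g → ZMod 2) : aPart (Sum.elim a b) = a := rfl
lemma bPart_elim (a b : Fin g → ZMod 2) : bPart (Sum.elim a b) = b := rfl
lemma elim_parts (x : Char2 g) : Sum.elim (aPart x) (bPart x) = x := by
  funext i; cases i <;> rfl
lemma qc_elim (a b : Fin g → ZMod 2) : qc (Sum.elim a b) = a ⬝ᵥ b := rfl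

lemma pairing_comm (x y : Char2 g) : pairing x y = pairing y x := by
  unfold pairing
  rw [dotProduct_comm (aPart x), dotProduct_comm (bPart x)]
  exact add_comm _ _

lemma pairing_self (x : Char2 g) : pairing x x = 0 := by
  unfold pairing
  rw [dotProduct_comm]
  exact z2_add_self' _

lemma pairing_add_left (x y z : Char2 g) :
    pairing (x + y) z = pairing x z + pairing y z := by
  unfold pairing
  rw [aPart_add, bPart_add, add_dotProduct, add_dotProduct]
  abel

lemma pairing_add_right (x y z : Char2 g) :
    pairing x (y + z) = pairing x y + pairing x z := by
  rw [pairing_comm, pairing_add_left, pairing_comm y x, pairing_comm z x]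

lemma pairing_smul_left (c : ZMod 2) (x y : Char2 g) :
    pairing (c • x) y = c * pairing x y := by
  unfold pairing
  rw [aPart_smul, bPart_smul, smul_dotProduct, smul_dotProduct]
  simp [mul_add, smul_eq_mul]

lemma pairing_smul_right (c : ZMod 2) (x y : Char2 g) :
    pairing x (c • y) = c * pairing x y := by
  rw [pairing_comm, pairing_smul_left, pairing_comm y x]

lemma qc_add (x y : Char2 g) : qc (x + y) = qc x + qc y + pairing x y := by
  unfold qc pairing
  rw [aPart_add, bPart_add, dotProduct_add, add_dotProduct, add_dotProduct,
    dotProduct_comm (aPart y) (bPart x)]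
  abel

lemma qc_smul (c : ZMod 2) (x : Char2 g) : qc (c • x) = c * qc x := by
  unfold qc
  rw [aPart_smul, bPart_smul, smul_dotProduct, dotProduct_smul, smul_eq_mul,
    smul_eq_mul, ← mul_assoc, z2_mul_self]

/-- dot product over the sum type splits -/
lemma dot_split (x y : Char2 g) :
    x ⬝ᵥ y = aPart x ⬝ᵥ aPart y + bPart x ⬝ᵥ bPart y := by
  unfold dotProduct
  rw [Fintype.sum_sum_type]
  rfl

lemma pairing_J (x y : Char2 g) :
    x ⬝ᵥ (J (Fin g) (ZMod 2) *ᵥ y) = pairing x y := by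
  conv_lhs => rw [← elim_parts y]
  rw [J2, fromBlocks_mulVec, Matrix.zero_mulVec, Matrix.one_mulVec, Matrix.one_mulVec,
    Matrix.zero_mulVec, zero_add, add_zero, dot_split, aPart_elim, bPart_elim]
  rfl

lemma mv_dot_mv {n : Type*} [Fintype n] (M N : Matrix n n (ZMod 2)) (x y : n → ZMod 2) :
    (M *ᵥ x) ⬝ᵥ (N *ᵥ y) = x ⬝ᵥ ((Mᵀ * N) *ᵥ y) := by
  rw [← Matrix.mulVec_mulVec, Matrix.dotProduct_mulVec x Mᵀ, Matrix.vecMul_transpose]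

lemma eq_of_mulVec_eq {M N : SpMat g} (h : ∀ y : Char2 g, M *ᵥ y = N *ᵥ y) : M = N := by
  ext i j
  have := congrFun (h (Pi.single j 1)) i
  rw [Matrix.mulVec_single, Matrix.mulVec_single] at this
  simpa using this

/-- pairing-preservation gives symplectic membership -/
lemma pair_pres_mem {M : SpMat g}
    (h : ∀ x y : Char2 g, pairing (M *ᵥ x) (M *ᵥ y) = pairing x y) :
    M ∈ symplecticGroup (Fin g) (ZMod 2) := by
  rw [SymplecticGroup.mem_iff']
  apply eq_of_mulVec_eq
  intro y
  funext i
  have hx : ∀ x : Char2 g, x ⬝ᵥ ((Mᵀ * J (Fin g) (ZMod 2) * M) *ᵥ y)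
      = x ⬝ᵥ (J (Fin g) (ZMod 2) *ᵥ y) := by
    intro x
    have e : (Mᵀ * J (Fin g) (ZMod 2) * M) *ᵥ y
        = Mᵀ *ᵥ (J (Fin g) (ZMod 2) *ᵥ (M *ᵥ y)) := by
      rw [Matrix.mulVec_mulVec, Matrix.mulVec_mulVec]
    rw [e, Matrix.dotProduct_mulVec, Matrix.vecMul_transpose, pairing_J, h, ← pairing_J]
  have h1 := hx (Pi.single i 1)
  rwa [single_dotProduct, single_dotProduct, one_mul, one_mul] at h1


/-- symplectic transvection attached to `w` -/
def Tv (w : Char2 g) : SpMat g := 1 + Matrix.vecMulVec w (Sum.elim (bPart w) (aPart w))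

lemma elimw_dot (w m : Char2 g) : Sum.elim (bPart w) (aPart w) ⬝ᵥ m = pairing m w := by
  rw [dot_split, aPart_elim, bPart_elim]
  unfold pairing
  rw [dotProduct_comm, dotProduct_comm (aPart w), add_comm]

lemma Tv_mulVec (w m : Char2 g) : Tv w *ᵥ m = m + pairing m w • w := by
  unfold Tv
  rw [Matrix.add_mulVec, Matrix.one_mulVec]
  congr 1
  rw [← elimw_dot w m]
  funext i
  simp only [Matrix.mulVec, Matrix.vecMulVec_apply, dotProduct, Pi.smul_apply, smul_eq_mul]
  rw [Finset.sum_mul]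
  exact Finset.sum_congr rfl fun j _ => by ring

lemma Tv_pair (w x y : Char2 g) :
    pairing (Tv w *ᵥ x) (Tv w *ᵥ y) = pairing x y := by
  rw [Tv_mulVec, Tv_mulVec, pairing_add_left, pairing_add_right, pairing_add_right,
    pairing_smul_left, pairing_smul_right, pairing_smul_right, pairing_smul_left,
    pairing_self]
  have hyx : pairing w y = pairing y w := pairing_comm _ _
  rw [hyx]
  linear_combination (pairing y w * pairing x w) * z2_two

lemma Tv_qc {w : Char2 g} (hw : qc w = 1) (m : Char2 g) :
    qc (Tv w *ᵥ m) = qc m := by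
  rw [Tv_mulVec, qc_add, qc_smul, hw, pairing_smul_right, z2_mul_self, mul_one,
    add_assoc, z2_add_self', add_zero]

lemma Tv_invol (w : Char2 g) : Tv w * Tv w = 1 := by
  apply eq_of_mulVec_eq
  intro y
  rw [← Matrix.mulVec_mulVec, Tv_mulVec, Tv_mulVec, Matrix.one_mulVec,
    pairing_add_left, pairing_smul_left, pairing_self, mul_zero, add_zero,
    add_assoc, ← add_smul, z2_add_self', zero_smul, add_zero]

/-- the quadratic form computation for the inverse-transpose action -/
lemma qc_affLin {A B C D : Mg g}
    (h : fromBlocks A B C D ∈ symplecticGroup (Fin g) (ZMod 2))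
    (a b : Fin g → ZMod 2) :
    (D *ᵥ a + C *ᵥ b) ⬝ᵥ (B *ᵥ a + A *ᵥ b)
      = a ⬝ᵥ b + (Matrix.diag (Dᵀ * B) ⬝ᵥ a + Matrix.diag (Cᵀ * A) ⬝ᵥ b) := by
  obtain ⟨r1, r2, r3, r4, r5, r6, r7, r8⟩ := sp_rels h
  rw [dotProduct_add, add_dotProduct, add_dotProduct]
  rw [show (D *ᵥ a) ⬝ᵥ (B *ᵥ a) = a ⬝ᵥ ((Dᵀ * B) *ᵥ a) from mv_dot_mv D B a a]
  rw [show (C *ᵥ b) ⬝ᵥ (A *ᵥ b) = b ⬝ᵥ ((Cᵀ * A) *ᵥ b) from mv_dot_mv C A b b]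
  rw [show (D *ᵥ a) ⬝ᵥ (A *ᵥ b) = a ⬝ᵥ ((Dᵀ * A) *ᵥ b) from mv_dot_mv D A a b]
  rw [show (C *ᵥ b) ⬝ᵥ (B *ᵥ a) = a ⬝ᵥ ((Bᵀ * C) *ᵥ b) from by
    rw [dotProduct_comm]; exact mv_dot_mv B C a b]
  rw [dot_mulVec_symm (Dᵀ * B) (by rw [Matrix.transpose_mul, Matrix.transpose_transpose, r5]),
    dot_mulVec_symm (Cᵀ * A) (by rw [Matrix.transpose_mul, Matrix.transpose_transpose, r4])]
  have hcross : a ⬝ᵥ ((Dᵀ * A) *ᵥ b) + a ⬝ᵥ ((Bᵀ * C) *ᵥ b) = a ⬝ᵥ b := by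
    rw [← dotProduct_add, ← Matrix.add_mulVec, r7, Matrix.one_mulVec]
  linear_combination hcross

/-- q-preservation of the affine-linear part forces the inverse into `H`. -/
lemma offVec_of_qpres {σ : SpMat g} (hσ : σ ∈ symplecticGroup (Fin g) (ZMod 2))
    (hq : ∀ m : Char2 g, qc ((σᵀ)⁻¹ *ᵥ m) = qc m) : offVec σ⁻¹ = 0 := by
  rw [← fromBlocks_toBlocks σ] at hσ hq ⊢
  set A := σ.toBlocks₁₁; set B := σ.toBlocks₁₂; set C := σ.toBlocks₂₁; set D := σ.toBlocks₂₂
  rw [spT_inv hσ] at hq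
  rw [sp_inv hσ, offVec_fromBlocks]
  have key : ∀ a b : Fin g → ZMod 2,
      Matrix.diag (Dᵀ * B) ⬝ᵥ a + Matrix.diag (Cᵀ * A) ⬝ᵥ b = 0 := by
    intro a b
    have h1 := hq (Sum.elim a b)
    rw [fromBlocks_mulVec] at h1
    simp only [Sum.elim_comp_inl, Sum.elim_comp_inr, qc_elim] at h1
    rw [qc_affLin hσ a b] at h1
    exact (left_eq_add.mp h1.symm)
  have hDB : Matrix.diag (Dᵀ * B) = 0 := by
    funext i
    have := key (Pi.single i 1) 0
    rwa [dotProduct_zero, add_zero, dotProduct_single, mul_one] at this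
  have hCA : Matrix.diag (Cᵀ * A) = 0 := by
    funext i
    have := key 0 (Pi.single i 1)
    rwa [dotProduct_zero, zero_add, dotProduct_single, mul_one] at this
  rw [show Matrix.diag (Cᵀ * Aᵀᵀ) = Matrix.diag (Cᵀ * A) from by rw [Matrix.transpose_transpose],
    show Matrix.diag (Dᵀ * Bᵀᵀ) = Matrix.diag (Dᵀ * B) from by rw [Matrix.transpose_transpose],
    hDB, hCA]
  funext i; cases i <;> rfl


lemma z2_one_of_ne {x : ZMod 2} (h : x ≠ 0) : x = 1 := by revert x; decide
lemma z2_zero_of_ne_one {x : ZMod 2} (h : x ≠ 1) : x = 0 := by revert x; decide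

lemma vec_add_self (x : Char2 g) : x + x = 0 := funext fun _ => z2_add_self' _

lemma bPart_single_inr (j : Fin g) :
    bPart (Pi.single (Sum.inr j : Fin g ⊕ Fin g) (1 : ZMod 2)) = Pi.single j 1 := by
  funext i
  simp [bPart, Pi.single_apply]

lemma aPart_single_inr (j : Fin g) :
    aPart (Pi.single (Sum.inr j : Fin g ⊕ Fin g) (1 : ZMod 2)) = 0 := by
  funext i
  simp [aPart, Pi.single_apply]

lemma aPart_single_inl (j : Fin g) :
    aPart (Pi.single (Sum.inl j : Fin g ⊕ Fin g) (1 : ZMod 2)) = Pi.single j 1 := by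
  funext i
  simp [aPart, Pi.single_apply]

lemma bPart_single_inl (j : Fin g) :
    bPart (Pi.single (Sum.inl j : Fin g ⊕ Fin g) (1 : ZMod 2)) = 0 := by
  funext i
  simp [bPart, Pi.single_apply]

lemma exists_pairing_one {u : Char2 g} (hu : u ≠ 0) : ∃ x, pairing u x = 1 := by
  have hex : ∃ i, u i ≠ 0 := by
    by_contra hc
    push_neg at hc
    exact hu (funext fun i => hc i)
  obtain ⟨i, hi⟩ := hex
  cases i with
  | inl j =>
    refine ⟨Pi.single (Sum.inr j) 1, ?_⟩
    unfold pairing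
    rw [bPart_single_inr, aPart_single_inr, dotProduct_single, dotProduct_zero,
      add_zero, mul_one]
    exact z2_one_of_ne hi
  | inr j =>
    refine ⟨Pi.single (Sum.inl j) 1, ?_⟩
    unfold pairing
    rw [aPart_single_inl, bPart_single_inl, dotProduct_single, dotProduct_zero,
      zero_add, mul_one]
    exact z2_one_of_ne hi

/-- A pair of mutually inverse, pairing- and q- preserving matrices. -/
def IsGood (M M' : SpMat g) : Prop :=
  M * M' = 1 ∧ M' * M = 1 ∧
  (∀ x y, pairing (M *ᵥ x) (M *ᵥ y) = pairing x y) ∧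
  (∀ x y, pairing (M' *ᵥ x) (M' *ᵥ y) = pairing x y) ∧
  (∀ x, qc (M *ᵥ x) = qc x) ∧ (∀ x, qc (M' *ᵥ x) = qc x)

lemma good_one : IsGood (1 : SpMat g) 1 := by
  refine ⟨one_mul 1, one_mul 1, ?_, ?_, ?_, ?_⟩ <;>
    intros <;> rw [Matrix.one_mulVec] <;> try rw [Matrix.one_mulVec]

lemma good_Tv {w : Char2 g} (hw : qc w = 1) : IsGood (Tv w) (Tv w) :=
  ⟨Tv_invol w, Tv_invol w, Tv_pair w, Tv_pair w, Tv_qc hw, Tv_qc hw⟩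

lemma good_mul {M₁ M₁' M₂ M₂' : SpMat g} (h1 : IsGood M₁ M₁') (h2 : IsGood M₂ M₂') :
    IsGood (M₁ * M₂) (M₂' * M₁') := by
  obtain ⟨a1, b1, p1, p1', q1, q1'⟩ := h1
  obtain ⟨a2, b2, p2, p2', q2, q2'⟩ := h2
  refine ⟨?_, ?_, ?_, ?_, ?_, ?_⟩
  · rw [Matrix.mul_assoc, ← Matrix.mul_assoc M₂, a2, Matrix.one_mul, a1]
  · rw [Matrix.mul_assoc, ← Matrix.mul_assoc M₁', b1, Matrix.one_mul, b2]
  · intro x y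
    rw [← Matrix.mulVec_mulVec, ← Matrix.mulVec_mulVec, p1, p2]
  · intro x y
    rw [← Matrix.mulVec_mulVec, ← Matrix.mulVec_mulVec, p2', p1']
  · intro x
    rw [← Matrix.mulVec_mulVec, q1, q2]
  · intro x
    rw [← Matrix.mulVec_mulVec, q2', q1']

lemma exists_good_map {u v : Char2 g} (hu : u ≠ 0) (hv : v ≠ 0)
    (hqu : qc u = 0) (hqv : qc v = 0) :
    ∃ M M' : SpMat g, IsGood M M' ∧ M *ᵥ u = v := by
  by_cases huv : u = v
  · exact ⟨1, 1, good_one, by rw [Matrix.one_mulVec, huv]⟩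
  by_cases hp : pairing u v = 1
  · have hqw : qc (u + v) = 1 := by
      rw [qc_add, hqu, hqv, hp, zero_add, zero_add]
    refine ⟨Tv (u + v), Tv (u + v), good_Tv hqw, ?_⟩
    rw [Tv_mulVec, pairing_add_right, pairing_self, zero_add, hp, one_smul,
      ← add_assoc, vec_add_self, zero_add]
  · have hp0 : pairing u v = 0 := z2_zero_of_ne_one hp
    obtain ⟨w₀, hw₀u, hw₀v⟩ : ∃ w₀, pairing u w₀ = 1 ∧ pairing v w₀ = 1 := by
      obtain ⟨x, hx⟩ := exists_pairing_one hu
      obtain ⟨y, hy⟩ := exists_pairing_one hv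
      by_cases hvx : pairing v x = 1
      · exact ⟨x, hx, hvx⟩
      by_cases huy : pairing u y = 1
      · exact ⟨y, huy, hy⟩
      · refine ⟨x + y, ?_, ?_⟩
        · rw [pairing_add_right, hx, z2_zero_of_ne_one huy, add_zero]
        · rw [pairing_add_right, z2_zero_of_ne_one hvx, hy, zero_add]
    obtain ⟨w, hqw, hwu, hwv⟩ : ∃ w, qc w = 0 ∧ pairing u w = 1 ∧ pairing v w = 1 := by
      by_cases hq0 : qc w₀ = 0
      · exact ⟨w₀, hq0, hw₀u, hw₀v⟩
      · refine ⟨w₀ + u, ?_, ?_, ?_⟩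
        · rw [qc_add, z2_one_of_ne hq0, hqu, pairing_comm w₀ u, hw₀u, add_zero]
          exact z2_add_self' 1
        · rw [pairing_add_right, hw₀u, pairing_self, add_zero]
        · rw [pairing_add_right, hw₀v, pairing_comm v u, hp0, add_zero]
    have hq1 : qc (u + w) = 1 := by
      rw [qc_add, hqu, hqw, hwu, zero_add, zero_add]
    have hq2 : qc (w + v) = 1 := by
      rw [qc_add, hqw, hqv, pairing_comm w v, hwv, zero_add, zero_add]
    refine ⟨Tv (w + v) * Tv (u + w), Tv (u + w) * Tv (w + v),
      good_mul (good_Tv hq2) (good_Tv hq1), ?_⟩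
    rw [← Matrix.mulVec_mulVec]
    have step1 : Tv (u + w) *ᵥ u = w := by
      rw [Tv_mulVec, pairing_add_right, pairing_self, zero_add, hwu, one_smul,
        ← add_assoc, vec_add_self, zero_add]
    rw [step1, Tv_mulVec, pairing_add_right, pairing_self, zero_add,
      pairing_comm w v, hwv, one_smul, ← add_assoc, vec_add_self, zero_add]

/-- The auxiliary symmetric matrix `E` with a single 1 in the corner. -/
def eMat (g : ℕ) : Mg g := Matrix.of fun i j => if i.1 = 0 ∧ j.1 = 0 then 1 else 0

lemma eMat_symm : (eMat g)ᵀ = eMat g := by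
  ext i j
  simp only [Matrix.transpose_apply, eMat, Matrix.of_apply]
  exact if_congr and_comm rfl rfl

/-- The matrix τ₀ generating the second double coset. -/
def tau0 (g : ℕ) : SpMat g := fromBlocks 1 (eMat g) 0 1

lemma tau0_mem : tau0 g ∈ symplecticGroup (Fin g) (ZMod 2) := by
  rw [SymplecticGroup.mem_iff, J2]
  unfold tau0
  rw [fromBlocks_transpose, fromBlocks_multiply, fromBlocks_multiply]
  simp only [Matrix.mul_zero, Matrix.mul_one, Matrix.zero_mul, Matrix.one_mul,
    zero_add, add_zero, Matrix.transpose_zero, Matrix.transpose_one]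
  rw [eMat_symm]
  rw [show eMat g + eMat g = 0 from mat_add_self _]

lemma offVec_tau0 : offVec (tau0 g) = Sum.elim (0 : Fin g → ZMod 2) (Matrix.diag (eMat g)) := by
  unfold tau0
  rw [offVec_fromBlocks, eMat_symm, Matrix.one_mul, Matrix.zero_mul, Matrix.diag_zero]

lemma mem_stab_iff (σ : SpGrp g) : σ ∈ stabSet g 0 ↔ offVec (σ : SpMat g) = 0 := by
  unfold stabSet affAct
  simp only [Set.mem_setOf_eq, Matrix.mulVec_zero, zero_add]

lemma affLin_cancel {σ : SpMat g} (hσ : σ ∈ symplecticGroup (Fin g) (ZMod 2))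
    {x : Char2 g} (h : (σᵀ)⁻¹ *ᵥ x = 0) : x = 0 := by
  rw [← fromBlocks_toBlocks σ] at hσ h
  rw [spT_inv hσ] at h
  have h2 := congrArg (fun y => (fromBlocks σ.toBlocks₁₁ σ.toBlocks₁₂ σ.toBlocks₂₁
    σ.toBlocks₂₂)ᵀ *ᵥ y) h
  simp only [Matrix.mulVec_mulVec, Matrix.mulVec_zero] at h2
  rwa [spT_mul_affLin hσ, Matrix.one_mulVec] at h2

/-- τ₀ as a group element. -/
def tau0el (g : ℕ) : SpGrp g := ⟨tau0 g, tau0_mem⟩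

/-- The two-double-coset covering of `Sp(g, F₂)`. -/
lemma covering (σ : SpGrp g) :
    σ ∈ stabSet g 0 ∨ ∃ h k : SpGrp g, h ∈ stabSet g 0 ∧ k ∈ stabSet g 0 ∧
      σ = h * tau0el g * k := by
  by_cases h0 : offVec (σ : SpMat g) = 0
  · exact Or.inl ((mem_stab_iff σ).mpr h0)
  right
  set v := offVec (σ : SpMat g) with hv
  -- v is a nonzero even characteristic, g ≥ 1
  have hvne : v ≠ 0 := h0
  have hex : ∃ i, v i ≠ 0 := by
    by_contra hc; push_neg at hc; exact hvne (funext fun i => hc i)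
  obtain ⟨i0, hi0⟩ := hex
  have hgpos : 0 < g := by
    cases i0 with
    | inl j => exact j.pos
    | inr j => exact j.pos
  set u := offVec (tau0 g) with hu
  have hune : u ≠ 0 := by
    intro hz
    have := congrFun hz (Sum.inr ⟨0, hgpos⟩)
    rw [hu, offVec_tau0] at this
    simp only [Sum.elim_inr, Matrix.diag_apply, Pi.zero_apply] at this
    unfold eMat at this
    simp at this
  have hqu : qc u = 0 := by
    rw [hu, offVec_tau0, qc_elim, zero_dotProduct]
  have hqv : qc v = 0 := by
    have hm := σ.2
    rw [← fromBlocks_toBlocks (σ : SpMat g)] at hm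
    rw [hv]
    conv_lhs => rw [← fromBlocks_toBlocks (σ : SpMat g)]
    rw [offVec_fromBlocks, qc_elim]
    exact even_offVec hm
  obtain ⟨M, M', hgood, hMu⟩ := exists_good_map hune hvne hqu hqv
  obtain ⟨hMM', hM'M, hMpair, hM'pair, hMq, hM'q⟩ := hgood
  have hMmem : M ∈ symplecticGroup (Fin g) (ZMod 2) := pair_pres_mem hMpair
  have hM'mem : M' ∈ symplecticGroup (Fin g) (ZMod 2) := pair_pres_mem hM'pair
  have hmatmem : M'ᵀ ∈ symplecticGroup (Fin g) (ZMod 2) :=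
    SymplecticGroup.transpose_mem hM'mem
  -- h := M'ᵀ is in the stabilizer
  have hoff : offVec (M'ᵀ) = 0 := by
    have hMT : Mᵀ ∈ symplecticGroup (Fin g) (ZMod 2) :=
      SymplecticGroup.transpose_mem hMmem
    have hinv : (Mᵀᵀ)⁻¹ = M' := by
      rw [Matrix.transpose_transpose]
      exact Matrix.inv_eq_right_inv hMM'
    have hq : ∀ m : Char2 g, qc ((Mᵀᵀ)⁻¹ *ᵥ m) = qc m := by
      intro m; rw [hinv]; exact hM'q m
    have := offVec_of_qpres hMT hq
    rwa [show (Mᵀ)⁻¹ = M'ᵀ from Matrix.inv_eq_right_inv (by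
      rw [← Matrix.transpose_mul, hM'M, Matrix.transpose_one])] at this
  set hEl : SpGrp g := ⟨M'ᵀ, hmatmem⟩ with hhEl
  set tEl : SpGrp g := tau0el g with htEl
  have hstab : hEl ∈ stabSet g 0 := (mem_stab_iff hEl).mpr hoff
  -- offVec of h * τ₀ is v
  have hlin : ((M'ᵀ)ᵀ)⁻¹ = M := by
    rw [Matrix.transpose_transpose]
    exact Matrix.inv_eq_right_inv hM'M
  have hofft : offVec ((hEl * tEl : SpGrp g) : SpMat g) = v := by
    have : ((hEl * tEl : SpGrp g) : SpMat g) = M'ᵀ * tau0 g := rfl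
    rw [this, offVec_mul hmatmem tau0_mem, hlin, hoff, add_zero, ← hu, hMu]
  set kEl : SpGrp g := (hEl * tEl)⁻¹ * σ with hkEl
  have hsigma : σ = hEl * tEl * kEl := by
    rw [hkEl, ← mul_assoc, mul_inv_cancel, one_mul]
  have hkstab : kEl ∈ stabSet g 0 := by
    rw [mem_stab_iff]
    have hcoe : (σ : SpMat g) = ((hEl * tEl : SpGrp g) : SpMat g) * (kEl : SpMat g) := by
      rw [hsigma]; rfl
    have hoc := offVec_mul (hEl * tEl).2 kEl.2
    rw [← hcoe, ← hv, hofft] at hoc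
    exact affLin_cancel (hEl * tEl).2 (right_eq_add.mp hoc)
  exact ⟨hEl, kEl, hstab, hkstab, hsigma⟩

instance spDecidable : DecidablePred (fun A : SpMat g => A ∈ symplecticGroup (Fin g) (ZMod 2)) :=
  fun _ => decidable_of_iff _ SymplecticGroup.mem_iff.symm

instance spFintype : Fintype (SpGrp g) :=
  Subtype.fintype fun A : SpMat g => A ∈ symplecticGroup (Fin g) (ZMod 2)

instance stabDecidable (x : SpGrp g) : Decidable (x ∈ stabSet g 0) :=
  decidable_of_iff _ (mem_stab_iff x).symm

lemma epsz (σ : SpMat g) :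
    epsChar 0 σ = sgn2 (Matrix.trace ((σ.toBlocks₁₂)ᵀ * σ.toBlocks₂₁)) := by
  unfold epsChar quadF
  rw [show aPart (0 : Char2 g) = 0 from rfl, show bPart (0 : Char2 g) = 0 from rfl,
    zero_dotProduct, zero_dotProduct, add_zero, add_zero]

lemma sgn2_add (x y : ZMod 2) : sgn2 (x + y) = sgn2 x * sgn2 y := by revert x y; decide

lemma offVec_one : offVec (1 : SpMat g) = 0 := by
  rw [← fromBlocks_one, offVec_fromBlocks]
  funext i
  cases i <;> simp

lemma stab_one : (1 : SpGrp g) ∈ stabSet g 0 := by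
  rw [mem_stab_iff]
  exact offVec_one

lemma stab_mul {a b : SpGrp g} (ha : a ∈ stabSet g 0) (hb : b ∈ stabSet g 0) :
    a * b ∈ stabSet g 0 := by
  rw [mem_stab_iff] at ha hb ⊢
  rw [show ((a * b : SpGrp g) : SpMat g) = (a : SpMat g) * (b : SpMat g) from rfl,
    offVec_mul a.2 b.2, ha, hb, Matrix.mulVec_zero, add_zero]

lemma stab_inv {a : SpGrp g} (ha : a ∈ stabSet g 0) : a⁻¹ ∈ stabSet g 0 := by
  rw [mem_stab_iff] at ha ⊢
  have hone : ((a : SpMat g)) * ((a⁻¹ : SpGrp g) : SpMat g) = 1 := by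
    rw [show (a : SpMat g) * ((a⁻¹ : SpGrp g) : SpMat g)
        = ((a * a⁻¹ : SpGrp g) : SpMat g) from rfl, mul_inv_cancel]
    rfl
  have h := offVec_mul a.2 (a⁻¹ : SpGrp g).2
  rw [hone, offVec_one, ha, add_zero] at h
  exact affLin_cancel a.2 h.symm

lemma eps_mul {a b : SpGrp g} (hb : b ∈ stabSet g 0) :
    epsChar 0 ((a * b : SpGrp g) : SpMat g)
      = epsChar 0 (a : SpMat g) * epsChar 0 (b : SpMat g) := by
  have hbm := (mem_stab_iff b).mp hb
  have ha2 := a.2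
  have hb2 := b.2
  rw [show ((a * b : SpGrp g) : SpMat g) = (a : SpMat g) * (b : SpMat g) from rfl]
  rw [← fromBlocks_toBlocks (a : SpMat g)] at ha2 ⊢
  rw [← fromBlocks_toBlocks (b : SpMat g)] at hb2 hbm ⊢
  rw [offVec_fromBlocks] at hbm
  have hcd : Matrix.diag ((b : SpMat g).toBlocks₂₁ * ((b : SpMat g).toBlocks₂₂)ᵀ) = 0 :=
    funext fun i => congrFun hbm (Sum.inl i)
  have hab : Matrix.diag ((b : SpMat g).toBlocks₁₁ * ((b : SpMat g).toBlocks₁₂)ᵀ) = 0 :=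
    funext fun i => congrFun hbm (Sum.inr i)
  rw [fromBlocks_multiply, epsz, epsz, epsz]
  simp only [Matrix.toBlocks_fromBlocks₁₂, Matrix.toBlocks_fromBlocks₂₁]
  rw [eps_tr_mul ha2 hb2 hcd hab, sgn2_add]

lemma eps_one : epsChar 0 ((1 : SpGrp g) : SpMat g) = 1 := by
  rw [show ((1 : SpGrp g) : SpMat g) = (1 : SpMat g) from rfl, ← fromBlocks_one, epsz]
  simp only [Matrix.toBlocks_fromBlocks₁₂, Matrix.toBlocks_fromBlocks₂₁,
    Matrix.transpose_zero, Matrix.zero_mul, Matrix.trace_zero]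
  rfl

lemma eps_inv_mul {a : SpGrp g} (ha : a ∈ stabSet g 0) :
    epsChar 0 ((a⁻¹ : SpGrp g) : SpMat g) * epsChar 0 (a : SpMat g) = 1 := by
  have h := eps_mul (a := a⁻¹) (b := a) ha
  rw [inv_mul_cancel, eps_one] at h
  exact h.symm

/-- The canonical vector of the induced representation, supported on `H`. -/
noncomputable def F0 (g : ℕ) : SpGrp g → ℂ := fun x =>
  if x ∈ stabSet g 0 then ((epsChar 0 (x : SpMat g) : ℤ) : ℂ) else 0

lemma mem_IndEps_iff (f : SpGrp g → ℂ) :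
    f ∈ IndEps g 0 ↔ ∀ h x : SpGrp g, h ∈ stabSet g 0 →
      f (h * x) = ((epsChar 0 (h : SpMat g) : ℤ) : ℂ) * f x := Iff.rfl

lemma F0_mem : F0 g ∈ IndEps g 0 := by
  rw [mem_IndEps_iff]
  intro h x hh
  by_cases hx : x ∈ stabSet g 0
  · rw [F0, F0, if_pos (stab_mul hh hx), if_pos hx, eps_mul hx]
    push_cast
    ring
  · have hmx : h * x ∉ stabSet g 0 := by
      intro hc
      have := stab_mul (stab_inv hh) hc
      rw [← mul_assoc, inv_mul_cancel, one_mul] at this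
      exact hx this
    rw [F0, F0, if_neg hmx, if_neg hx, mul_zero]

noncomputable def F0el (g : ℕ) : IndEps g 0 := ⟨F0 g, F0_mem⟩

lemma rT_F0 {k : SpGrp g} (hk : k ∈ stabSet g 0) :
    rTrans g 0 k (F0el g) = ((epsChar 0 (k : SpMat g) : ℤ) : ℂ) • F0el g := by
  apply Subtype.ext
  funext x
  show F0 g (x * k) = ((epsChar 0 (k : SpMat g) : ℤ) : ℂ) * F0 g x
  by_cases hx : x ∈ stabSet g 0
  · rw [F0, F0, if_pos (stab_mul hx hk), if_pos hx, eps_mul hk]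
    push_cast
    ring
  · have hxk : x * k ∉ stabSet g 0 := by
      intro hc
      have := stab_mul hc (stab_inv hk)
      rw [mul_assoc, mul_inv_cancel, mul_one] at this
      exact hx this
    rw [F0, F0, if_neg hxk, if_neg hx, mul_zero]

/-- order of the theta group -/
noncomputable def Nc (g : ℕ) : ℕ :=
  (Finset.univ.filter (fun h : SpGrp g => h ∈ stabSet g 0)).card

lemma Nc_pos : 0 < Nc g := by
  apply Finset.card_pos.mpr
  exact ⟨1, Finset.mem_filter.mpr ⟨Finset.mem_univ _, stab_one⟩⟩

lemma span_eval (f : IndEps g 0) (y : SpGrp g) :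
    ∑ x : SpGrp g, (f : SpGrp g → ℂ) x * F0 g (y * x⁻¹)
      = (Nc g : ℂ) * (f : SpGrp g → ℂ) y := by
  classical
  have hre : ∑ x : SpGrp g, (f : SpGrp g → ℂ) x * F0 g (y * x⁻¹)
      = ∑ h : SpGrp g, (f : SpGrp g → ℂ) (h⁻¹ * y) * F0 g h := by
    refine (Fintype.sum_equiv ((Equiv.inv (SpGrp g)).trans (Equiv.mulRight y))
      (fun h => (f : SpGrp g → ℂ) (h⁻¹ * y) * F0 g h)
      (fun x => (f : SpGrp g → ℂ) x * F0 g (y * x⁻¹)) ?_).symm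
    intro h
    show (f : SpGrp g → ℂ) (h⁻¹ * y) * F0 g h
      = (f : SpGrp g → ℂ) (h⁻¹ * y) * F0 g (y * (h⁻¹ * y)⁻¹)
    rw [_root_.mul_inv_rev, inv_inv, mul_inv_cancel_left]
  rw [hre]
  have hterm : ∀ h : SpGrp g, (f : SpGrp g → ℂ) (h⁻¹ * y) * F0 g h
      = if h ∈ stabSet g 0 then (f : SpGrp g → ℂ) y else 0 := by
    intro h
    by_cases hh : h ∈ stabSet g 0
    · rw [F0, if_pos hh, if_pos hh]
      rw [(mem_IndEps_iff _).mp f.2 h⁻¹ y (stab_inv hh)]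
      have := eps_inv_mul hh
      have hcast : ((epsChar 0 ((h⁻¹ : SpGrp g) : SpMat g) : ℤ) : ℂ)
          * ((epsChar 0 ((h : SpGrp g) : SpMat g) : ℤ) : ℂ) = 1 := by
        rw [← Int.cast_mul, this, Int.cast_one]
      calc ((epsChar 0 ((h⁻¹ : SpGrp g) : SpMat g) : ℤ) : ℂ) * (f : SpGrp g → ℂ) y
            * ((epsChar 0 ((h : SpGrp g) : SpMat g) : ℤ) : ℂ)
          = (((epsChar 0 ((h⁻¹ : SpGrp g) : SpMat g) : ℤ) : ℂ)
            * ((epsChar 0 ((h : SpGrp g) : SpMat g) : ℤ) : ℂ)) * (f : SpGrp g → ℂ) y := by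
            ring
        _ = (f : SpGrp g → ℂ) y := by rw [hcast, one_mul]
    · rw [F0, if_neg hh, if_neg hh, mul_zero]
  rw [Finset.sum_congr rfl (fun h _ => hterm h), Finset.sum_ite, Finset.sum_const,
    Finset.sum_const_zero, add_zero, Nc]
  rw [nsmul_eq_mul]

end ThetaAux


/-- `dim Hom_G(Ind_H^G(ε_H), Ind_H^G(ε_H)) ≤ 2`, where `H` is the
theta group: no three `G`-equivariant endomorphisms are linearly independent.
Hence `Ind_H^G(ε_H)` is irreducible or has exactly two non-isomorphic
irreducible components. -/
theorem dim_equivariant_endos_le_two (g : ℕ)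
    (φ : Fin 3 → (IndEps g 0 →ₗ[ℂ] IndEps g 0))
    (hφ : ∀ i, IsEquivariant g 0 (φ i)) :
    ¬ LinearIndependent ℂ φ := by
  classical
  intro hLI
  have hequiv : ∀ (i : Fin 3) (σ : SpGrp g) (f : IndEps g 0),
      φ i (rTrans g 0 σ f) = rTrans g 0 σ (φ i f) := fun i σ f =>
    LinearMap.congr_fun (hφ i σ) f
  set t0 : SpGrp g := ThetaAux.tau0el g with ht0
  set uvec : Fin 3 → (Fin 2 → ℂ) := fun i =>
    ![((φ i (ThetaAux.F0el g)) : SpGrp g → ℂ) 1,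
      ((φ i (ThetaAux.F0el g)) : SpGrp g → ℂ) t0] with huvec
  have hnli : ¬ LinearIndependent ℂ uvec := by
    intro hcon
    have hcard := hcon.fintype_card_le_finrank
    rw [Module.finrank_fintype_fun_eq_card] at hcard
    simp at hcard
  obtain ⟨c, hcsum, i₀, hci₀⟩ := Fintype.not_linearIndependent_iff.mp hnli
  set ψ : IndEps g 0 →ₗ[ℂ] IndEps g 0 := ∑ i, c i • φ i with hψ
  have hψapp : ∀ f, ψ f = ∑ i, c i • φ i f := by
    intro f
    rw [hψ, LinearMap.sum_apply]
    exact Finset.sum_congr rfl fun i _ => rfl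
  have hψequiv : ∀ (σ : SpGrp g) (f : IndEps g 0),
      ψ (rTrans g 0 σ f) = rTrans g 0 σ (ψ f) := by
    intro σ f
    rw [hψapp, hψapp, map_sum]
    refine Finset.sum_congr rfl fun i _ => ?_
    rw [hequiv i σ f, _root_.map_smul]
  set w : IndEps g 0 := ψ (ThetaAux.F0el g) with hw
  have hwcoe : (w : SpGrp g → ℂ)
      = ∑ i, c i • ((φ i (ThetaAux.F0el g)) : SpGrp g → ℂ) := by
    rw [hw, hψapp, Submodule.coe_sum]
    exact Finset.sum_congr rfl fun i _ => rfl
  have hw1 : (w : SpGrp g → ℂ) 1 = 0 := by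
    have h0 := congrFun hcsum 0
    rw [Finset.sum_apply] at h0
    simp only [huvec, Pi.smul_apply, smul_eq_mul, Matrix.cons_val_zero,
      Pi.zero_apply] at h0
    rw [hwcoe, Finset.sum_apply]
    simpa using h0
  have hwt : (w : SpGrp g → ℂ) t0 = 0 := by
    have h0 := congrFun hcsum 1
    rw [Finset.sum_apply] at h0
    simp only [huvec, Pi.smul_apply, smul_eq_mul, Matrix.cons_val_one,
      Matrix.head_cons, Pi.zero_apply] at h0
    rw [hwcoe, Finset.sum_apply]
    simpa using h0
  have hwprop := (ThetaAux.mem_IndEps_iff ((w : SpGrp g → ℂ))).mp w.2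
  have hwright : ∀ k, k ∈ stabSet g 0 → ∀ x : SpGrp g,
      (w : SpGrp g → ℂ) (x * k)
        = ((epsChar 0 ((k : SpGrp g) : SpMat g) : ℤ) : ℂ) * (w : SpGrp g → ℂ) x := by
    intro k hk x
    have h1 : (w : SpGrp g → ℂ) (x * k)
        = ((rTrans g 0 k w : IndEps g 0) : SpGrp g → ℂ) x := rfl
    rw [h1, hw, ← hψequiv k, ThetaAux.rT_F0 hk, _root_.map_smul]
    rfl
  have hwzero : ∀ σ : SpGrp g, (w : SpGrp g → ℂ) σ = 0 := by
    intro σ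
    rcases ThetaAux.covering σ with hσ | ⟨h, k, hh, hk, rfl⟩
    · have hval := hwprop σ 1 hσ
      rw [mul_one] at hval
      rw [hval, hw1, mul_zero]
    · rw [show h * ThetaAux.tau0el g * k = h * t0 * k from rfl,
        hwright k hk (h * t0), hwprop h t0 hh, hwt, mul_zero, mul_zero]
  have hwz : w = 0 := Subtype.ext (funext hwzero)
  have hψzero : ψ = 0 := by
    apply LinearMap.ext
    intro f
    have hspan : (∑ x : SpGrp g,
        (f : SpGrp g → ℂ) x • (rTrans g 0 x⁻¹ (ThetaAux.F0el g)))
        = (ThetaAux.Nc g : ℂ) • f := by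
      apply Subtype.ext
      rw [Submodule.coe_sum]
      funext y
      rw [Finset.sum_apply]
      have hterm : ∀ x : SpGrp g,
          (((f : SpGrp g → ℂ) x • rTrans g 0 x⁻¹ (ThetaAux.F0el g) : IndEps g 0)
            : SpGrp g → ℂ) y
          = (f : SpGrp g → ℂ) x * ThetaAux.F0 g (y * x⁻¹) := fun x => rfl
      rw [Finset.sum_congr rfl fun x _ => hterm x, ThetaAux.span_eval f y]
      rfl
    have hkey : (ThetaAux.Nc g : ℂ) • ψ f = 0 := by
      rw [← _root_.map_smul, ← hspan, map_sum]
      have hterm : ∀ x : SpGrp g,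
          ψ ((f : SpGrp g → ℂ) x • rTrans g 0 x⁻¹ (ThetaAux.F0el g)) = 0 := by
        intro x
        rw [_root_.map_smul, hψequiv x⁻¹ (ThetaAux.F0el g), ← hw, hwz, _root_.map_zero, smul_zero]
      rw [Finset.sum_congr rfl fun x _ => hterm x, Finset.sum_const_zero]
    have hnc : (ThetaAux.Nc g : ℂ) ≠ 0 :=
      Nat.cast_ne_zero.mpr (ThetaAux.Nc_pos).ne'
    rcases smul_eq_zero.mp hkey with hcon | hgoal
    · exact absurd hcon hnc
    · simpa using hgoal
  refine hci₀ ((Fintype.linearIndependent_iff (R := ℂ) (v := φ)).mp hLI c ?_ i₀)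
  rw [← hψ]
  exact hψzero
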